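/- arXiv:nlin/0406007 — 2 statements merged into one kernel-verified Lean document; each statement's English description precedes it below -/
import Mathlib

section
/- Let α, β, γ, ε : ℝ with γ ≠ 0, and let a : ℝ be arbitrary. Define Y(z) = a + (1/10)(β/γ - ε)·tanh((1/10)(β/γ - ε)·z) and y(z) = -12γ·Y(z)² + (24γa + (12/5)β - (12/5)εγ)·Y(z) - (12/5)βa + (3/25)β²/γ + (19/25)βε - α - 12γa² + (12/5)γaε - (22/25)γε². Then y satisfies γ·y''' + β·y'' + α·y' + y·y' + (ε/2)·y² - C₀·y + C₁ = 0 on ℝ, where C₀ and C₁ are given by C₀ = (4/5)γεa² + (4/5)γεb - (126/125)γε³ - (4/5)βa² - (4/5)βb - (3/125)εβ²/γ + (128/125)ε²β - εα + (1/125)β³/γ² and C₁ = (1/2)εα² + γε³α - ε²βα + (409/1250)ε³β² - (18/625)εβ⁴/γ² - (553/625)γε⁴β + (72/625)ε²β³/γ + (589/1250)γ²ε⁵, with b = (1/100)ε² - a² - (1/50)βε/γ + (1/100)β²/γ². -/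
lemma hasDerivAt_tanh' (x : ℝ) : HasDerivAt Real.tanh (1 - Real.tanh x ^ 2) x := by
  have hc : Real.cosh x ≠ 0 := ne_of_gt (Real.cosh_pos x)
  have h := (Real.hasDerivAt_sinh x).div (Real.hasDerivAt_cosh x) hc
  have hfun : (fun y => Real.sinh y / Real.cosh y) = Real.tanh := by
    funext y; rw [Real.tanh_eq_sinh_div_cosh]
  rw [show (Real.sinh / Real.cosh) = fun y => Real.sinh y / Real.cosh y from rfl, hfun] at h
  refine h.congr_deriv ?_
  have hid := Real.cosh_sq_sub_sinh_sq x
  rw [Real.tanh_eq_sinh_div_cosh]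
  field_simp

lemma tanh_poly_deriv (k p q r s w : ℝ) (z : ℝ) :
    HasDerivAt (fun z => p*(Real.tanh (k*z))^4 + q*(Real.tanh (k*z))^3
      + r*(Real.tanh (k*z))^2 + s*(Real.tanh (k*z)) + w)
    ((4*p*(Real.tanh (k*z))^3 + 3*q*(Real.tanh (k*z))^2 + 2*r*(Real.tanh (k*z)) + s)
      * ((1-(Real.tanh (k*z))^2)*k)) z := by
  have hu : HasDerivAt (fun z : ℝ => Real.tanh (k*z)) ((1-(Real.tanh (k*z))^2)*k) z := by
    have := (hasDerivAt_tanh' (k*z)).comp z ((hasDerivAt_id z).const_mul k)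
    simpa [mul_comm, Function.comp_def] using this
  have h := ((((hu.pow 4).const_mul p).add ((hu.pow 3).const_mul q)).add
    ((hu.pow 2).const_mul r)).add (hu.const_mul s) |>.add_const w
  refine h.congr_deriv ?_
  ring

set_option maxHeartbeats 3000000 in
theorem convective_fluid_solitary_wave (α β γ ε a : ℝ) (hγ : γ ≠ 0) :
    let Y : ℝ → ℝ := fun z =>
      a + (1/10) * (β/γ - ε) * Real.tanh ((1/10) * (β/γ - ε) * z)
    let y : ℝ → ℝ := fun z =>
      -12*γ*(Y z)^2 + (24*γ*a + (12/5)*β - (12/5)*ε*γ) * Y z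
        - (12/5)*β*a + (3/25)*β^2/γ + (19/25)*β*ε - α - 12*γ*a^2
        + (12/5)*γ*a*ε - (22/25)*γ*ε^2
    let b : ℝ := (1/100)*ε^2 - a^2 - (1/50)*β*ε/γ + (1/100)*β^2/γ^2
    let C₀ : ℝ := (4/5)*γ*ε*a^2 + (4/5)*γ*ε*b - (126/125)*γ*ε^3 - (4/5)*β*a^2
      - (4/5)*β*b - (3/125)*ε*β^2/γ + (128/125)*ε^2*β - ε*α + (1/125)*β^3/γ^2
    let C₁ : ℝ := (1/2)*ε*α^2 + γ*ε^3*α - ε^2*β*α + (409/1250)*ε^3*β^2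
      - (18/625)*ε*β^4/γ^2 - (553/625)*γ*ε^4*β + (72/625)*ε^2*β^3/γ
      + (589/1250)*γ^2*ε^5
    ∀ z : ℝ,
      γ * deriv (deriv (deriv y)) z + β * deriv (deriv y) z + α * deriv y z
        + y z * deriv y z + (ε/2) * (y z)^2 - C₀ * y z + C₁ = 0 := by
  intro Y y b C₀ C₁ z
  set k : ℝ := (1/10) * (β/γ - ε) with hk
  set c : ℝ := 24*γ*a + (12/5)*β - (12/5)*ε*γ with hc
  set D : ℝ := -(12/5)*β*a + (3/25)*β^2/γ + (19/25)*β*ε - α - 12*γ*a^2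
      + (12/5)*γ*a*ε - (22/25)*γ*ε^2 with hD
  set A2 : ℝ := -12*γ*k^2 with hA2
  set A1 : ℝ := -24*γ*a*k + c*k with hA1
  set A0 : ℝ := -12*γ*a^2 + c*a + D with hA0
  set u : ℝ → ℝ := fun z => Real.tanh (k*z) with hu
  have hy : y = fun z => 0*(u z)^4 + 0*(u z)^3 + A2*(u z)^2 + A1*(u z) + A0 := by
    funext z
    have hYz : Y z = a + k * u z := by simp [Y, hu, hk]
    simp only [y, hYz, hA2, hA1, hA0, hc, hD]
    ring
  set B3 : ℝ := -2*A2*k with hB3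
  set B2 : ℝ := -A1*k with hB2
  set B1 : ℝ := 2*A2*k with hB1
  set B0 : ℝ := A1*k with hB0
  set d1 : ℝ → ℝ := fun z => 0*(u z)^4 + B3*(u z)^3 + B2*(u z)^2 + B1*(u z) + B0 with hd1
  have h1 : ∀ z, HasDerivAt y (d1 z) z := by
    intro z
    rw [hy]
    have h := tanh_poly_deriv k 0 0 A2 A1 A0 z
    convert h using 1
    simp only [hd1, hB3, hB2, hB1, hB0, hu]
    ring
  set C4 : ℝ := -3*B3*k with hC4
  set C3 : ℝ := -2*B2*k with hC3
  set C2 : ℝ := (3*B3 - B1)*k with hC2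
  set Cc1 : ℝ := 2*B2*k with hCc1
  set Cc0 : ℝ := B1*k with hCc0
  set d2 : ℝ → ℝ := fun z => C4*(u z)^4 + C3*(u z)^3 + C2*(u z)^2 + Cc1*(u z) + Cc0 with hd2
  have h2 : ∀ z, HasDerivAt d1 (d2 z) z := by
    intro z
    rw [hd1]
    have h := tanh_poly_deriv k 0 B3 B2 B1 B0 z
    convert h using 1
    simp only [hd2, hC4, hC3, hC2, hCc1, hCc0, hu]
    ring
  set d3 : ℝ → ℝ := fun z => (4*C4*(u z)^3 + 3*C3*(u z)^2 + 2*C2*(u z) + Cc1)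
      * ((1-(u z)^2)*k) with hd3
  have h3 : ∀ z, HasDerivAt d2 (d3 z) z := by
    intro z
    rw [hd2]
    exact tanh_poly_deriv k C4 C3 C2 Cc1 Cc0 z
  have e1 : deriv y = d1 := funext fun z => (h1 z).deriv
  have e2 : deriv (deriv y) = d2 := by rw [e1]; exact funext fun z => (h2 z).deriv
  have e3 : deriv (deriv (deriv y)) = d3 := by rw [e2]; exact funext fun z => (h3 z).deriv
  rw [e3, e2, e1, hy]
  simp only [hd1, hd2, hd3, hC4, hC3, hC2, hCc1, hCc0, hB3, hB2, hB1, hB0,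
    hA2, hA1, hA0, hc, hD, hk, C₁, C₀, b]

  set T : ℝ := u z with hT2
  field_simp
  ring
end

section
/- Suppose Y : ℝ → ℝ satisfies the Riccati equation Y' + Y² - 2aY - ((1/100)ε² - a² - (1/50)βε/γ + (1/100)β²/γ²) = 0 on ℝ, with γ ≠ 0. Then y := -12γY² + (24γa + (12/5)(β - εγ))Y + A₀ with A₀ = -(12/5)βa + (3/25)β²/γ + (19/25)βε - α - 12γa² + (12/5)γaε - (22/25)γε² satisfies γy''' + βy'' + αy' + yy' + (ε/2)y² - C₀y + C₁ = 0 on ℝ for the values of C₀ and C₁ given by C₀ = (4/5)γεa² + (4/5)γεb - (126/125)γε³ - (4/5)βa² - (4/5)βb - (3/125)εβ²/γ + (128/125)ε²β - εα + (1/125)β³/γ², C₁ = (1/2)εα² + γε³α - ε²βα + (409/1250)ε³β² - (18/625)εβ⁴/γ² - (553/625)γε⁴β + (72/625)ε²β³/γ + (589/1250)γ²ε⁵, where b = (1/100)ε² - a² - (1/50)βε/γ + (1/100)β²/γ². -/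
set_option maxHeartbeats 2000000

open Polynomial

theorem convective_fluid_from_riccati (α β γ ε a : ℝ) (hγ : γ ≠ 0)
    (Y : ℝ → ℝ) (hY : Differentiable ℝ Y)
    (hRic : ∀ z, deriv Y z + (Y z)^2 - 2*a*(Y z)
      - ((1/100)*ε^2 - a^2 - (1/50)*β*ε/γ + (1/100)*β^2/γ^2) = 0) :
    let A₀ : ℝ := -(12/5)*β*a + (3/25)*β^2/γ + (19/25)*β*ε - α - 12*γ*a^2
      + (12/5)*γ*a*ε - (22/25)*γ*ε^2
    let y : ℝ → ℝ := fun z =>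
      -12*γ*(Y z)^2 + (24*γ*a + (12/5)*(β - ε*γ)) * Y z + A₀
    let b : ℝ := (1/100)*ε^2 - a^2 - (1/50)*β*ε/γ + (1/100)*β^2/γ^2
    let C₀ : ℝ := (4/5)*γ*ε*a^2 + (4/5)*γ*ε*b - (126/125)*γ*ε^3 - (4/5)*β*a^2
      - (4/5)*β*b - (3/125)*ε*β^2/γ + (128/125)*ε^2*β - ε*α + (1/125)*β^3/γ^2
    let C₁ : ℝ := (1/2)*ε*α^2 + γ*ε^3*α - ε^2*β*α + (409/1250)*ε^3*β^2
      - (18/625)*ε*β^4/γ^2 - (553/625)*γ*ε^4*β + (72/625)*ε^2*β^3/γ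
      + (589/1250)*γ^2*ε^5
    ∀ z : ℝ,
      γ * deriv (deriv (deriv y)) z + β * deriv (deriv y) z + α * deriv y z
        + y z * deriv y z + (ε/2) * (y z)^2 - C₀ * y z + C₁ = 0 := by
  intro A₀ y b C₀ C₁ z
  have hb : b = (1/100)*ε^2 - a^2 - (1/50)*β*ε/γ + (1/100)*β^2/γ^2 := rfl
  have hA : A₀ = -(12/5)*β*a + (3/25)*β^2/γ + (19/25)*β*ε - α - 12*γ*a^2
      + (12/5)*γ*a*ε - (22/25)*γ*ε^2 := rfl
  have hC0 : C₀ = (4/5)*γ*ε*a^2 + (4/5)*γ*ε*b - (126/125)*γ*ε^3 - (4/5)*β*a^2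
      - (4/5)*β*b - (3/125)*ε*β^2/γ + (128/125)*ε^2*β - ε*α + (1/125)*β^3/γ^2 := rfl
  have hC1 : C₁ = (1/2)*ε*α^2 + γ*ε^3*α - ε^2*β*α + (409/1250)*ε^3*β^2
      - (18/625)*ε*β^4/γ^2 - (553/625)*γ*ε^4*β + (72/625)*ε^2*β^3/γ
      + (589/1250)*γ^2*ε^5 := rfl
  set Pq : Polynomial ℝ := C (-1) * X^2 + C (2*a) * X + C b with hPq
  set P0 : Polynomial ℝ := C (-12*γ) * X^2 + C (24*γ*a + (12/5)*(β - ε*γ)) * X + C A₀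
    with hP0
  have hq : ∀ w, HasDerivAt Y (Pq.eval (Y w)) w := by
    intro w
    have h1 := (hY w).hasDerivAt
    have h2 := hRic w
    have : deriv Y w = Pq.eval (Y w) := by
      simp only [hPq, eval_add, eval_mul, eval_pow, eval_C, eval_X, hb]
      linarith
    rwa [this] at h1
  have key : ∀ (p : Polynomial ℝ) (w : ℝ),
      HasDerivAt (fun z => p.eval (Y z)) ((p.derivative * Pq).eval (Y w)) w := by
    intro p w
    have h := (p.hasDerivAt (Y w)).comp w (hq w)
    rw [eval_mul]; exact h
  have hy0 : y = fun z => P0.eval (Y z) := by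
    funext w
    simp only [y, hP0, eval_add, eval_mul, eval_pow, eval_C, eval_X]
  have hD1 : deriv y = fun z => (P0.derivative * Pq).eval (Y z) := by
    rw [hy0]; exact funext fun w => (key P0 w).deriv
  have hD2 : deriv (deriv y)
      = fun z => ((P0.derivative * Pq).derivative * Pq).eval (Y z) := by
    rw [hD1]; exact funext fun w => (key _ w).deriv
  have hD3 : deriv (deriv (deriv y)) z
      = (((P0.derivative * Pq).derivative * Pq).derivative * Pq).eval (Y z) := by
    rw [hD2]; exact (key _ z).deriv
  rw [hD3, hD2, hD1, hy0]
  simp only [hP0, hPq, derivative_add, derivative_mul, derivative_C, derivative_X,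
    derivative_pow, derivative_X_pow, eval_add, eval_mul, eval_pow, eval_C, eval_X,
    eval_sub, eval_natCast, Nat.cast_ofNat, map_ofNat, derivative_zero, derivative_one,
    derivative_ofNat, eval_zero, eval_one, eval_ofNat, Nat.add_one_sub_one, Nat.sub_self, Nat.cast_one, pow_one, pow_zero]
  rw [hC0, hC1, hb, hA]
  field_simp
  ring
end
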